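/- If γ and γ' are two distinct roots of F, with contact orders r and r' and truncations γ̃ (keeping coefficients in degrees ≤ r) and γ̃' (keeping coefficients in degrees ≤ r') respectively, then γ̃ ≠ γ̃'. In other words, the map sending a Newton–Puiseux root of f to its truncated root is injective. -/

import Mathlib

open PowerSeries

/-- The map sending a Newton–Puiseux root of `f` to its truncated root (keeping the
coefficients in degrees up to the contact order) is injective: distinct roots have
distinct truncations. -/
theorem truncated_roots_distinct
    (f : MvPolynomial (Fin 2) ℝ) (hf : f ≠ 0)
    (m₀ : ℕ) (hm₀ : ∀ j < m₀, MvPolynomial.homogeneousComponent j f = 0)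
    (hm₀' : MvPolynomial.homogeneousComponent m₀ f ≠ 0)
    (hreg : MvPolynomial.eval ![1, 0] (MvPolynomial.homogeneousComponent m₀ f) ≠ 0)
    (N : ℕ) (hN : 0 < N)
    (γ γ' : PowerSeries ℂ)
    (hroot : MvPolynomial.aeval ![γ, (PowerSeries.X : PowerSeries ℂ) ^ N] f = 0)
    (hroot' : MvPolynomial.aeval ![γ', (PowerSeries.X : PowerSeries ℂ) ^ N] f = 0)
    (hne : γ ≠ γ')
    (r : ℕ)
    (hrmax : (∃ δ : PowerSeries ℂ,
        MvPolynomial.aeval ![δ, (PowerSeries.X : PowerSeries ℂ) ^ N] f = 0 ∧ δ ≠ γ ∧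
        (γ - δ).order = (r : ℕ∞)) ∧
      ∀ δ : PowerSeries ℂ,
        MvPolynomial.aeval ![δ, (PowerSeries.X : PowerSeries ℂ) ^ N] f = 0 → δ ≠ γ →
        (γ - δ).order ≤ (r : ℕ∞))
    (r' : ℕ)
    (hrmax' : (∃ δ : PowerSeries ℂ,
        MvPolynomial.aeval ![δ, (PowerSeries.X : PowerSeries ℂ) ^ N] f = 0 ∧ δ ≠ γ' ∧
        (γ' - δ).order = (r' : ℕ∞)) ∧
      ∀ δ : PowerSeries ℂ,
        MvPolynomial.aeval ![δ, (PowerSeries.X : PowerSeries ℂ) ^ N] f = 0 → δ ≠ γ' →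
        (γ' - δ).order ≤ (r' : ℕ∞))
    (γt γt' : PowerSeries ℂ)
    (hγt : ∀ k : ℕ, PowerSeries.coeff k γt =
      if k ≤ r then PowerSeries.coeff k γ else 0)
    (hγt' : ∀ k : ℕ, PowerSeries.coeff k γt' =
      if k ≤ r' then PowerSeries.coeff k γ' else 0) :
    γt ≠ γt' := by
  intro h
  have hsub : γ - γ' ≠ 0 := sub_ne_zero.mpr hne
  have h1 : (γ - γ').order ≤ (r : ℕ∞) := hrmax.2 γ' hroot' (Ne.symm hne)
  have h2 : (γ' - γ).order ≤ (r' : ℕ∞) := hrmax'.2 γ hroot hne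
  have hne_top : (γ - γ').order ≠ ⊤ := fun ht => hsub (PowerSeries.order_eq_top.mp ht)
  obtain ⟨d, hd⟩ := WithTop.ne_top_iff_exists.mp hne_top
  have hd : (γ - γ').order = (d : ℕ∞) := hd.symm
  have hcoeff : PowerSeries.coeff d (γ - γ') ≠ 0 := (PowerSeries.order_eq_nat.mp hd).1
  have hlow : ∀ i < d, PowerSeries.coeff i (γ - γ') = 0 := (PowerSeries.order_eq_nat.mp hd).2
  have hd' : (γ' - γ).order = (d : ℕ∞) := by
    rw [PowerSeries.order_eq_nat]
    constructor
    · rw [show γ' - γ = -(γ - γ') by ring, map_neg]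
      simp only [map_neg, ne_eq, neg_eq_zero]
      exact hcoeff
    · intro i hi
      rw [show γ' - γ = -(γ - γ') by ring, map_neg, hlow i hi, neg_zero]
  have hdr : d ≤ r := by exact_mod_cast hd ▸ h1
  have hdr' : d ≤ r' := by exact_mod_cast hd' ▸ h2
  have e1 := hγt d
  have e2 := hγt' d
  rw [if_pos hdr] at e1
  rw [if_pos hdr'] at e2
  apply hcoeff
  rw [map_sub, ← e1, ← e2, h, sub_self]
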